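/- arXiv:2507.01122 — 4 statements merged into one kernel-verified Lean document; each statement's English description precedes it below -/
import Mathlib

section
/- For any probability distribution p(ab|xy) = Σ_λ q(λ) f(a|x,λ) g(b|y,λ) admitting a local hidden variable model with binary outcomes a,b ∈ {0,1} and binary settings x,y ∈ {0,1}, the CHSH quantity S = E(0,0) + E(0,1) + E(1,0) − E(1,1), where E(x,y) = Σ_{a,b} (−1)^{a+b} p(ab|xy), satisfies |S| ≤ 2. -/
open BigOperators

lemma chsh_key (a a' b b' : ℝ) (ha : |a| ≤ 1) (ha' : |a'| ≤ 1)
    (hb : |b| ≤ 1) (hb' : |b'| ≤ 1) :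
    |a * (b + b') + a' * (b - b')| ≤ 2 := by
  have h1 : |a * (b + b') + a' * (b - b')| ≤ |a| * |b + b'| + |a'| * |b - b'| := by
    calc _ ≤ |a * (b + b')| + |a' * (b - b')| := abs_add_le _ _
    _ = |a| * |b + b'| + |a'| * |b - b'| := by rw [abs_mul, abs_mul]
  have h2 : |a| * |b + b'| + |a'| * |b - b'| ≤ |b + b'| + |b - b'| := by
    have := abs_nonneg (b + b'); have := abs_nonneg (b - b')
    nlinarith
  have h3 : |b + b'| + |b - b'| ≤ 2 := by
    rw [abs_le] at hb hb'
    rcases abs_cases (b + b') with ⟨e1, _⟩ | ⟨e1, _⟩ <;>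
    rcases abs_cases (b - b') with ⟨e2, _⟩ | ⟨e2, _⟩ <;> linarith
  linarith

/-- any correlations admitting a local hidden variable model with
binary outcomes and settings satisfy the CHSH inequality `|S| ≤ 2`. -/
theorem stmt6 {Λ : Type*} [Fintype Λ]
    (q : Λ → ℝ) (f g : Fin 2 → Fin 2 → Λ → ℝ)
    (hq0 : ∀ l, 0 ≤ q l) (hq1 : ∑ l, q l = 1)
    (hf0 : ∀ a x l, 0 ≤ f a x l) (hf1 : ∀ x l, ∑ a, f a x l = 1)
    (hg0 : ∀ b y l, 0 ≤ g b y l) (hg1 : ∀ y l, ∑ b, g b y l = 1)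
    (p : Fin 2 → Fin 2 → Fin 2 → Fin 2 → ℝ)
    (hp : ∀ a b x y, p a b x y = ∑ l, q l * f a x l * g b y l)
    (E : Fin 2 → Fin 2 → ℝ)
    (hE : ∀ x y, E x y = ∑ a : Fin 2, ∑ b : Fin 2, (-1 : ℝ) ^ (a.val + b.val) * p a b x y) :
    |E 0 0 + E 0 1 + E 1 0 - E 1 1| ≤ 2 := by
  set A : Fin 2 → Λ → ℝ := fun x l => f 0 x l - f 1 x l with hA
  set B : Fin 2 → Λ → ℝ := fun y l => g 0 y l - g 1 y l with hB
  have hAabs : ∀ x l, |A x l| ≤ 1 := by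
    intro x l
    have h := hf1 x l
    rw [Fin.sum_univ_two] at h
    have := hf0 0 x l; have := hf0 1 x l
    rw [abs_le]; constructor <;> simp [hA] <;> linarith
  have hBabs : ∀ y l, |B y l| ≤ 1 := by
    intro y l
    have h := hg1 y l
    rw [Fin.sum_univ_two] at h
    have := hg0 0 y l; have := hg0 1 y l
    rw [abs_le]; constructor <;> simp [hB] <;> linarith
  have hE' : ∀ x y, E x y = ∑ l, q l * (A x l * B y l) := by
    intro x y
    simp only [hE, hp, Fin.sum_univ_two, Finset.mul_sum, ← Finset.sum_add_distrib]
    apply Finset.sum_congr rfl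
    intro l _
    simp only [hA, hB, Fin.val_zero, Fin.val_one]
    norm_num
    ring
  have hS : E 0 0 + E 0 1 + E 1 0 - E 1 1
      = ∑ l, q l * (A 0 l * (B 0 l + B 1 l) + A 1 l * (B 0 l - B 1 l)) := by
    simp only [hE', ← Finset.sum_add_distrib, ← Finset.sum_sub_distrib]
    apply Finset.sum_congr rfl
    intro l _
    ring
  rw [hS]
  calc |∑ l, q l * (A 0 l * (B 0 l + B 1 l) + A 1 l * (B 0 l - B 1 l))|
      ≤ ∑ l, |q l * (A 0 l * (B 0 l + B 1 l) + A 1 l * (B 0 l - B 1 l))| :=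
        Finset.abs_sum_le_sum_abs _ _
    _ ≤ ∑ l, q l * 2 := by
        apply Finset.sum_le_sum
        intro l _
        rw [abs_mul, abs_of_nonneg (hq0 l)]
        exact mul_le_mul_of_nonneg_left
          (chsh_key _ _ _ _ (hAabs 0 l) (hAabs 1 l) (hBabs 0 l) (hBabs 1 l)) (hq0 l)
    _ = 2 := by rw [← Finset.sum_mul, hq1, one_mul]
end

section
/- With measurements N_{a|x} = (I + (-1)^a n_x·σ)/2 where n_0, n_1, n_2 are the three standard basis vectors of R³, and M_{b|y} = (I + (-1)^b m_y·σ)/2 where m_y ∈ {(1,1,1)/√3, (1,1,-1)/√3, (1,-1,1)/√3, (1,-1,-1)/√3}, the isotropic state ρ_p with p > 1/√3 produces statistics violating the noncontextuality inequality p(01|22) + p(10|03) − p(11|00) + p(11|10) − p(11|12) − p(11|20) + p(11|21) + p(11|22) ≥ 0; i.e., the left-hand side evaluated on Tr[ρ_p(N_{a|x}⊗M_{b|y})] is strictly negative for p > 1/√3. -/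
open Matrix Kronecker BigOperators ComplexOrder

noncomputable section

def σ1 : Matrix (Fin 2) (Fin 2) ℂ := !![0, 1; 1, 0]
def σ2 : Matrix (Fin 2) (Fin 2) ℂ := !![0, -Complex.I; Complex.I, 0]
def σ3 : Matrix (Fin 2) (Fin 2) ℂ := !![1, 0; 0, -1]

/-- Qubit effect with Bloch vector `v`: `(I + v·σ)/2`. -/
def blochE (v : Fin 3 → ℝ) : Matrix (Fin 2) (Fin 2) ℂ :=
  ((1 : ℝ)/2) • (1 + (v 0 : ℂ) • σ1 + (v 1 : ℂ) • σ2 + (v 2 : ℂ) • σ3)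

/-- Projective measurement effect `(I + (-1)^a v·σ)/2`. -/
def blochMeas (v : Fin 3 → ℝ) (a : Fin 2) : Matrix (Fin 2) (Fin 2) ℂ :=
  blochE (((-1 : ℝ) ^ (a : ℕ)) • v)

/-- Projector onto `|Φ⁺⟩ = (|00⟩+|11⟩)/√2`. -/
def phiPlusProj : Matrix (Fin 2 × Fin 2) (Fin 2 × Fin 2) ℂ :=
  Matrix.of fun i j => if i.1 = i.2 ∧ j.1 = j.2 then (1/2 : ℂ) else 0

/-- Two-qubit isotropic state `ρ_p = p |Φ⁺⟩⟨Φ⁺| + (1-p) I/4`. -/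
def rhoIso (p : ℝ) : Matrix (Fin 2 × Fin 2) (Fin 2 × Fin 2) ℂ :=
  (p : ℂ) • phiPlusProj + (((1 - p)/4 : ℝ) : ℂ) • 1

/-- Octahedron directions (standard basis vectors) for Alice. -/
def nOct : Fin 3 → Fin 3 → ℝ := ![![1,0,0], ![0,1,0], ![0,0,1]]

/-- Cube directions for Bob. -/
def mCube : Fin 4 → Fin 3 → ℝ := fun y =>
  (Real.sqrt 3)⁻¹ • (![![1,1,1], ![1,1,-1], ![1,-1,1], ![1,-1,-1]] y)

/-- Correlations of the isotropic state with octahedron/cube measurements. -/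
def corrOC (p : ℝ) (a b : Fin 2) (x : Fin 3) (y : Fin 4) : ℝ :=
  ((rhoIso p * (blochMeas (nOct x) a ⊗ₖ blochMeas (mCube y) b)).trace).re

set_option maxHeartbeats 4000000 in
theorem corrOC_key (p : ℝ) :
    corrOC p 0 1 2 2 + corrOC p 1 0 0 3 - corrOC p 1 1 0 0 + corrOC p 1 1 1 0
      - corrOC p 1 1 1 2 - corrOC p 1 1 2 0 + corrOC p 1 1 2 1 + corrOC p 1 1 2 2
      = (1 - Real.sqrt 3 * p)/2 := by
  simp [corrOC, rhoIso, phiPlusProj, blochMeas, blochE, nOct, mCube, σ1, σ2, σ3,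
    Matrix.trace, Matrix.mul_apply, Matrix.kroneckerMap_apply, Fintype.sum_prod_type,
    Fin.sum_univ_two,
    Matrix.one_apply, Matrix.smul_apply, Matrix.add_apply, Complex.ext_iff]
  ring

/-- for `p > 1/√3`, the isotropic state with octahedron/cube
projective measurements violates the noncontextuality inequality
`p(01|22) + p(10|03) − p(11|00) + p(11|10) − p(11|12) − p(11|20) + p(11|21) + p(11|22) ≥ 0`. -/
theorem stmt7 (p : ℝ) (hp1 : p ≤ 1) (hp : 1 / Real.sqrt 3 < p) :
    corrOC p 0 1 2 2 + corrOC p 1 0 0 3 - corrOC p 1 1 0 0 + corrOC p 1 1 1 0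
      - corrOC p 1 1 1 2 - corrOC p 1 1 2 0 + corrOC p 1 1 2 1 + corrOC p 1 1 2 2
      < 0 := by
  rw [corrOC_key]
  have h3 : (0:ℝ) < Real.sqrt 3 := Real.sqrt_pos.mpr (by norm_num)
  rw [div_lt_iff₀ h3] at hp
  nlinarith
end
end

section
/- The four cube effects M_{b|y} = (I + (-1)^b m_y·σ)/2 with m_y ∈ {(1,1,1)/√3, (1,1,-1)/√3, (1,-1,1)/√3, (1,-1,-1)/√3} satisfy the nontrivial operational identity M_{0|0} + M_{1|1} + M_{1|2} + M_{0|3} = M_{1|0} + M_{0|1} + M_{0|2} + M_{1|3}, which is not a consequence of the normalization identities M_{0|y} + M_{1|y} = I alone. -/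
open Matrix Kronecker BigOperators ComplexOrder

noncomputable section

/-- Cube measurement effects `M_{b|y}`. -/
def cubeM (b : Fin 2) (y : Fin 4) : Matrix (Fin 2) (Fin 2) ℂ :=
  blochMeas (mCube y) b

/-- Coefficients of the nontrivial operational identity among the cube effects. -/
def cubeα : Fin 2 → Fin 4 → ℝ := ![![1, -1, -1, 1], ![-1, 1, 1, -1]]

/-- the cube effects satisfy the nontrivial operational identity
`M_{0|0} + M_{1|1} + M_{1|2} + M_{0|3} = M_{1|0} + M_{0|1} + M_{0|2} + M_{1|3}`,
and this identity is not a linear combination of the normalization relations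
`M_{0|y} + M_{1|y} − I = 0` (any such combination has coefficients `α b y = t y`
independent of `b`, with `Σ_y t y = 0`). -/
theorem stmt8 :
    (cubeM 0 0 + cubeM 1 1 + cubeM 1 2 + cubeM 0 3
      = cubeM 1 0 + cubeM 0 1 + cubeM 0 2 + cubeM 1 3)
    ∧ ¬ ∃ t : Fin 4 → ℝ, (∀ b y, cubeα b y = t y) ∧ ∑ y, t y = 0 := by
  constructor
  · ext i j
    fin_cases i <;> fin_cases j <;>
      simp [cubeM, blochMeas, blochE, mCube, σ1, σ2, σ3, Matrix.add_apply,
        Matrix.smul_apply, Matrix.one_apply] <;> ring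
  · rintro ⟨t, h, -⟩
    have h0 := h 0 0
    have h1 := h 1 0
    simp [cubeα] at h0 h1
    linarith
end
end

section
/- Suppose p(ab|xy) = Σ_{λ_A,λ_B} q(λ_A,λ_B) f(a|x,λ_A) g(b|y,λ_B) is a local model for correlations from a bipartite state ρ with Alice's POVM set N tomographically complete, and suppose each response function f(a|x,λ_A) takes the form Tr[ρ_{λ_A} N_{a|x}] for some density operators ρ_{λ_A}. Then the steered assemblage σ_{b|y} := Tr_B[(I ⊗ M_{b|y})ρ] on A admits the local-hidden-state decomposition σ_{b|y} = Σ_{λ_A} (Σ_{λ_B} q(λ_A,λ_B) g(b|y,λ_B)) ρ_{λ_A}, hence ρ is B→A unsteerable with respect to the measurement sets N, M. -/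
open Matrix Kronecker BigOperators ComplexOrder

noncomputable section

/-- Partial trace over the second factor. -/
def ptraceB {dA dB : ℕ} (X : Matrix (Fin dA × Fin dB) (Fin dA × Fin dB) ℂ) :
    Matrix (Fin dA) (Fin dA) ℂ :=
  Matrix.of fun i j => ∑ b, X (i, b) (j, b)

lemma ptrace_entry {dA dB : ℕ} (M : Matrix (Fin dB) (Fin dB) ℂ)
    (ρ : Matrix (Fin dA × Fin dB) (Fin dA × Fin dB) ℂ) (i j : Fin dA) :
    ptraceB (((1 : Matrix (Fin dA) (Fin dA) ℂ) ⊗ₖ M) * ρ) i j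
      = ∑ β, ∑ γ, M β γ * ρ (i, γ) (j, β) := by
  simp [ptraceB, Matrix.mul_apply, Fintype.sum_prod_type, Matrix.one_apply, ite_mul]

lemma ptrace_herm {dA dB : ℕ} (M : Matrix (Fin dB) (Fin dB) ℂ)
    (ρ : Matrix (Fin dA × Fin dB) (Fin dA × Fin dB) ℂ)
    (hM : M.IsHermitian) (hρ : ρ.IsHermitian) :
    (ptraceB (((1 : Matrix (Fin dA) (Fin dA) ℂ) ⊗ₖ M) * ρ)).IsHermitian := by
  ext i j
  rw [Matrix.conjTranspose_apply, ptrace_entry, ptrace_entry]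
  rw [Finset.sum_comm]
  push_cast [star_sum]
  refine Finset.sum_congr rfl fun β _ => Finset.sum_congr rfl fun γ _ => ?_
  rw [star_mul', ← hM.apply, ← hρ.apply]
  simp [mul_comm]

lemma ptrace_trace {dA dB : ℕ} (M : Matrix (Fin dB) (Fin dB) ℂ)
    (ρ : Matrix (Fin dA × Fin dB) (Fin dA × Fin dB) ℂ)
    (N : Matrix (Fin dA) (Fin dA) ℂ) :
    (ptraceB (((1 : Matrix (Fin dA) (Fin dA) ℂ) ⊗ₖ M) * ρ) * N).trace
      = (ρ * (N ⊗ₖ M)).trace := by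
  simp only [Matrix.trace, Matrix.diag, Matrix.mul_apply, ptrace_entry,
    Fintype.sum_prod_type, Matrix.kroneckerMap_apply, Finset.sum_mul, Finset.mul_sum]
  refine Finset.sum_congr rfl fun i _ => ?_
  conv_lhs => rw [Finset.sum_comm]
  conv_lhs => enter [2, β]; rw [Finset.sum_comm]
  conv_lhs => rw [Finset.sum_comm]
  conv_lhs => enter [2, γ]; rw [Finset.sum_comm]
  refine Finset.sum_congr rfl fun γ _ => Finset.sum_congr rfl fun j _ =>
    Finset.sum_congr rfl fun β _ => ?_
  ring

/-- if the correlations of `ρ` admit a local model whose Alice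
response functions are of the quantum form `f(a|x,λ_A) = Tr[ρ_{λ_A} N_{a|x}]`,
and Alice's POVM set is tomographically complete, then the steered assemblage
`σ_{b|y} = Tr_B[(I⊗M_{b|y})ρ]` admits the local-hidden-state decomposition
`σ_{b|y} = Σ_{λ_A} (Σ_{λ_B} q(λ_A,λ_B) g(b|y,λ_B)) ρ_{λ_A}`, i.e. `ρ` is B→A
unsteerable with respect to the measurement sets. -/
theorem stmt16 {dA dB : ℕ} {X Y AO BO ΛA ΛB : Type*}
    [Fintype X] [Fintype Y] [Fintype AO] [Fintype BO] [Fintype ΛA] [Fintype ΛB]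
    (ρ : Matrix (Fin dA × Fin dB) (Fin dA × Fin dB) ℂ)
    (hρ : ρ.PosSemidef) (hτ : ρ.trace = 1)
    (N : X → AO → Matrix (Fin dA) (Fin dA) ℂ)
    (M : Y → BO → Matrix (Fin dB) (Fin dB) ℂ)
    (hN : ∀ x, (∀ a, (N x a).PosSemidef) ∧ ∑ a, N x a = 1)
    (hM : ∀ y, (∀ b, (M y b).PosSemidef) ∧ ∑ b, M y b = 1)
    (q : ΛA → ΛB → ℝ) (hq0 : ∀ l u, 0 ≤ q l u) (hq1 : ∑ l, ∑ u, q l u = 1)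
    (rhoL : ΛA → Matrix (Fin dA) (Fin dA) ℂ)
    (hrhoL : ∀ l, (rhoL l).PosSemidef ∧ (rhoL l).trace = 1)
    (g : BO → Y → ΛB → ℝ)
    (hg0 : ∀ b y u, 0 ≤ g b y u) (hg1 : ∀ y u, ∑ b, g b y u = 1)
    (hmodel : ∀ (a : AO) (x : X) (b : BO) (y : Y),
      (ρ * (N x a ⊗ₖ M y b)).trace
        = ∑ l, ∑ u, ((q l u * g b y u : ℝ) : ℂ) * (rhoL l * N x a).trace)
    (htomo : ∀ Xm Ym : Matrix (Fin dA) (Fin dA) ℂ,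
      Xm.IsHermitian → Ym.IsHermitian →
      (∀ (a : AO) (x : X), (Xm * N x a).trace = (Ym * N x a).trace) → Xm = Ym) :
    ∀ (b : BO) (y : Y),
      ptraceB (((1 : Matrix (Fin dA) (Fin dA) ℂ) ⊗ₖ M y b) * ρ)
        = ∑ l, (((∑ u, q l u * g b y u : ℝ)) : ℂ) • rhoL l := by
  intro b y
  apply htomo
  · exact ptrace_herm _ _ ((hM y).1 b).1 hρ.1
  · unfold Matrix.IsHermitian
    rw [Matrix.conjTranspose_sum]
    refine Finset.sum_congr rfl fun l _ => ?_
    rw [Matrix.conjTranspose_smul, (hrhoL l).1.1]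
    congr 1
    simp [Complex.star_def, Complex.conj_ofReal]
  · intro a x
    rw [ptrace_trace, hmodel a x b y, Matrix.sum_mul, Matrix.trace_sum]
    refine Finset.sum_congr rfl fun l _ => ?_
    rw [Matrix.smul_mul, Matrix.trace_smul]
    push_cast
    rw [Finset.sum_smul]
    simp [smul_eq_mul]
end
end
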